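/- Let T(0)=0, T(1)=1, T(n+2)=4T(n+1)−T(n), and for odd n = 2m+1 define S(n) = n + Σ_{i=0}^{m−1} (6+4i)·T(m−i)^2. Then lim_{m→∞} S(2m+1)/T(2m+1) = (3+√3)/9. -/

import Mathlib

open Filter Finset Real

theorem stmt_8 (T : ℕ → ℝ)
    (h0 : T 0 = 0) (h1 : T 1 = 1)
    (hrec : ∀ n, T (n + 2) = 4 * T (n + 1) - T n) :
    Filter.Tendsto
      (fun m : ℕ =>
        ((2 * m + 1 : ℝ) + ∑ i ∈ Finset.range m, (6 + 4 * (i : ℝ)) * (T (m - i)) ^ 2)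
          / T (2 * m + 1))
      Filter.atTop (nhds ((3 + Real.sqrt 3) / 9)) := by
  set s : ℝ := Real.sqrt 3 with hs_def
  have hs2 : s ^ 2 = 3 := Real.sq_sqrt (by norm_num)
  have hs_nonneg : 0 ≤ s := Real.sqrt_nonneg 3
  clear_value s
  have hs1 : 1.7 < s := by nlinarith
  have hslt : s < 1.8 := by nlinarith
  have hs_pos : (0:ℝ) < s := by linarith
  have hs_ne : s ≠ 0 := ne_of_gt hs_pos
  have h2s_ne : (2 * s : ℝ) ≠ 0 := by positivity
  set a : ℝ := 2 + s with ha_def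
  clear_value a
  set b : ℝ := 2 - s with hb_def
  clear_value b
  have hb_pos : 0 < b := by rw [hb_def]; linarith
  have hb1 : b < 1 := by rw [hb_def]; linarith
  have hab : a * b = 1 := by rw [ha_def, hb_def]; linear_combination -hs2
  set q : ℝ := b ^ 2 with hq_def
  clear_value q
  have hq0 : 0 < q := by rw [hq_def]; positivity
  have hq1 : q < 1 := by rw [hq_def]; nlinarith
  set p : ℝ := a ^ 2 with hp_def
  clear_value p
  have hpq : p * q = 1 := by
    rw [hp_def, hq_def, ← mul_pow, hab, one_pow]
  have hqb : ∀ k : ℕ, q ^ k = b ^ (2 * k) := by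
    intro k
    rw [hq_def, ← pow_mul]
  -- closed form for T
  have hT : ∀ n, T n = (a ^ n - b ^ n) / (2 * s) := by
    intro n
    have ha2 : a ^ 2 = 4 * a - 1 := by rw [ha_def]; linear_combination hs2
    have hb2 : b ^ 2 = 4 * b - 1 := by rw [hb_def]; linear_combination hs2
    induction n using Nat.twoStepInduction with
    | zero => simp [h0]
    | one =>
        rw [h1, pow_one, pow_one, ha_def, hb_def,
          show (2:ℝ) + s - (2 - s) = 2 * s from by ring, div_self h2s_ne]
    | more n ih1 ih2 =>
        rw [hrec n, ih1, ih2]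
        linear_combination ((-(a ^ n)) * ha2 + (b ^ n) * hb2) / (2 * s)
  -- per-term identity
  have hterm : ∀ m : ℕ, ∀ i ∈ Finset.range m,
      (6 + 4 * (i : ℝ)) * (T (m - i)) ^ 2 * q ^ m
        = (6 + 4 * (i : ℝ)) * q ^ i / 12 + (6 + 4 * (i : ℝ)) * q ^ (2 * m - i) / 12
          - (6 + 4 * (i : ℝ)) * q ^ m / 6 := by
    intro m i hi
    have him : i ≤ m := (Finset.mem_range.1 hi).le
    have key1 : p ^ (m - i) * q ^ m = q ^ i := by
      have h : q ^ m = q ^ (m - i) * q ^ i := by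
        rw [← pow_add, Nat.sub_add_cancel him]
      rw [h, ← mul_assoc, ← mul_pow, hpq, one_pow, one_mul]
    have key2 : q ^ (m - i) * q ^ m = q ^ (2 * m - i) := by
      rw [← pow_add]
      congr 1
      omega
    have hT2 : (T (m - i)) ^ 2 = (p ^ (m - i) + q ^ (m - i) - 2) / 12 := by
      rw [hT (m - i), div_pow]
      have hsq : (a ^ (m - i) - b ^ (m - i)) ^ 2
          = p ^ (m - i) + q ^ (m - i) - 2 * (a * b) ^ (m - i) := by
        rw [hp_def, hq_def, mul_pow]
        ring
      have h12 : (2 * s) ^ 2 = 12 := by rw [mul_pow, hs2]; norm_num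
      rw [hsq, h12, hab, one_pow]
      ring
    rw [hT2]
    have expand : (6 + 4 * (i : ℝ)) * ((p ^ (m - i) + q ^ (m - i) - 2) / 12) * q ^ m
        = (6 + 4 * (i : ℝ)) * (p ^ (m - i) * q ^ m) / 12
          + (6 + 4 * (i : ℝ)) * (q ^ (m - i) * q ^ m) / 12
          - (6 + 4 * (i : ℝ)) * q ^ m / 6 := by ring
    rw [expand, key1, key2]
  -- sum of coefficients
  have hcoef : ∀ m : ℕ, (∑ i ∈ Finset.range m, (6 + 4 * (i : ℝ))) = 2 * m ^ 2 + 4 * m := by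
    intro m
    induction m with
    | zero => simp
    | succ n ih =>
        rw [Finset.sum_range_succ, ih]
        push_cast
        ring
  -- numerator times q^m
  have hnum_eq : ∀ m : ℕ,
      ((2 * m + 1 : ℝ) + ∑ i ∈ Finset.range m, (6 + 4 * (i : ℝ)) * (T (m - i)) ^ 2) * q ^ m
        = (2 * m + 1 : ℝ) * q ^ m
          + (∑ i ∈ Finset.range m, (6 + 4 * (i : ℝ)) * q ^ i) / 12
          + (∑ i ∈ Finset.range m, (6 + 4 * (i : ℝ)) * q ^ (2 * m - i)) / 12
          - (2 * (m : ℝ) ^ 2 + 4 * m) * q ^ m / 6 := by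
    intro m
    rw [add_mul, Finset.sum_mul]
    rw [Finset.sum_congr rfl (hterm m)]
    rw [Finset.sum_sub_distrib, Finset.sum_add_distrib]
    rw [← Finset.sum_div, ← Finset.sum_div, ← Finset.sum_div, ← Finset.sum_mul, hcoef m]
    ring
  -- denominator times q^m
  have hden_eq : ∀ m : ℕ, T (2 * m + 1) * q ^ m = (a - b * q ^ (2 * m)) / (2 * s) := by
    intro m
    rw [hT (2 * m + 1)]
    have h1' : a ^ (2 * m + 1) * q ^ m = a := by
      rw [hqb m, pow_succ, mul_comm (a ^ (2 * m)) a, mul_assoc, ← mul_pow, hab,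
        one_pow, mul_one]
    have h2' : b ^ (2 * m + 1) * q ^ m = b * q ^ (2 * m) := by
      rw [hqb m, hqb (2 * m), ← pow_add,
        show 2 * m + 1 + 2 * m = 2 * (2 * m) + 1 from by omega, pow_succ']
    calc (a ^ (2 * m + 1) - b ^ (2 * m + 1)) / (2 * s) * q ^ m
        = (a ^ (2 * m + 1) * q ^ m - b ^ (2 * m + 1) * q ^ m) / (2 * s) := by ring
      _ = (a - b * q ^ (2 * m)) / (2 * s) := by rw [h1', h2']
  -- limits
  have hqnorm : ‖q‖ < 1 := by rw [Real.norm_eq_abs, abs_of_pos hq0]; exact hq1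
  have hgeo : Tendsto (fun m : ℕ => q ^ m) atTop (nhds 0) :=
    tendsto_pow_atTop_nhds_zero_of_lt_one hq0.le hq1
  have hmq : Tendsto (fun m : ℕ => (m : ℝ) * q ^ m) atTop (nhds 0) := by
    simpa using tendsto_pow_const_mul_const_pow_of_lt_one 1 hq0.le hq1
  have hm2q : Tendsto (fun m : ℕ => (m : ℝ) ^ 2 * q ^ m) atTop (nhds 0) :=
    tendsto_pow_const_mul_const_pow_of_lt_one 2 hq0.le hq1
  have hA : Tendsto (fun m : ℕ => (2 * m + 1 : ℝ) * q ^ m) atTop (nhds 0) := by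
    have h : (fun m : ℕ => (2 * m + 1 : ℝ) * q ^ m)
        = fun m : ℕ => 2 * ((m : ℝ) * q ^ m) + q ^ m := by
      funext m; ring
    rw [h]
    simpa using ((hmq.const_mul 2).add hgeo)
  have hB : Tendsto (fun m : ℕ => (∑ i ∈ Finset.range m, (6 + 4 * (i : ℝ)) * q ^ i))
      atTop (nhds (6 * (1 - q)⁻¹ + 4 * (q / (1 - q) ^ 2))) := by
    have hg1 : HasSum (fun i : ℕ => 6 * q ^ i) (6 * (1 - q)⁻¹) :=
      (hasSum_geometric_of_lt_one hq0.le hq1).mul_left 6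
    have hg2 : HasSum (fun i : ℕ => 4 * ((i : ℝ) * q ^ i)) (4 * (q / (1 - q) ^ 2)) :=
      (hasSum_coe_mul_geometric_of_norm_lt_one hqnorm).mul_left 4
    have hsum := (hg1.add hg2).tendsto_sum_nat
    exact hsum.congr (fun m => Finset.sum_congr rfl fun i _ => by ring)
  have hC : Tendsto (fun m : ℕ => (∑ i ∈ Finset.range m, (6 + 4 * (i : ℝ)) * q ^ (2 * m - i)))
      atTop (nhds 0) := by
    have hub : ∀ m : ℕ, (∑ i ∈ Finset.range m, (6 + 4 * (i : ℝ)) * q ^ (2 * m - i))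
        ≤ (6 * m + 4 * (m : ℝ) ^ 2) * q ^ m := by
      intro m
      have hle : ∀ i ∈ Finset.range m,
          (6 + 4 * (i : ℝ)) * q ^ (2 * m - i) ≤ (6 + 4 * (m : ℝ)) * q ^ m := by
        intro i hi
        have him : i < m := Finset.mem_range.1 hi
        have hc1 : (6 + 4 * (i : ℝ)) ≤ 6 + 4 * (m : ℝ) := by
          have : (i : ℝ) ≤ m := by exact_mod_cast him.le
          linarith
        have hc2 : q ^ (2 * m - i) ≤ q ^ m :=
          pow_le_pow_of_le_one hq0.le hq1.le (by omega)
        have hc3 : (0:ℝ) ≤ q ^ (2 * m - i) := by positivity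
        nlinarith [pow_nonneg hq0.le m]
      calc (∑ i ∈ Finset.range m, (6 + 4 * (i : ℝ)) * q ^ (2 * m - i))
          ≤ ∑ _i ∈ Finset.range m, (6 + 4 * (m : ℝ)) * q ^ m := Finset.sum_le_sum hle
        _ = (m : ℝ) * ((6 + 4 * (m : ℝ)) * q ^ m) := by
            rw [Finset.sum_const, Finset.card_range, nsmul_eq_mul]
        _ = (6 * m + 4 * (m : ℝ) ^ 2) * q ^ m := by ring
    have hlb : ∀ m : ℕ, (0:ℝ) ≤ (∑ i ∈ Finset.range m, (6 + 4 * (i : ℝ)) * q ^ (2 * m - i)) := by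
      intro m
      apply Finset.sum_nonneg
      intro i _
      positivity
    have hbound : Tendsto (fun m : ℕ => (6 * m + 4 * (m : ℝ) ^ 2) * q ^ m) atTop (nhds 0) := by
      have h : (fun m : ℕ => (6 * m + 4 * (m : ℝ) ^ 2) * q ^ m)
          = fun m : ℕ => 6 * ((m : ℝ) * q ^ m) + 4 * ((m : ℝ) ^ 2 * q ^ m) := by
        funext m; ring
      rw [h]
      simpa using ((hmq.const_mul 6).add (hm2q.const_mul 4))
    exact squeeze_zero hlb hub hbound
  have hD : Tendsto (fun m : ℕ => (2 * (m : ℝ) ^ 2 + 4 * m) * q ^ m) atTop (nhds 0) := by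
    have h : (fun m : ℕ => (2 * (m : ℝ) ^ 2 + 4 * m) * q ^ m)
        = fun m : ℕ => 2 * ((m : ℝ) ^ 2 * q ^ m) + 4 * ((m : ℝ) * q ^ m) := by
      funext m; ring
    rw [h]
    simpa using ((hm2q.const_mul 2).add (hmq.const_mul 4))
  set L : ℝ := (6 * (1 - q)⁻¹ + 4 * (q / (1 - q) ^ 2)) with hL_def
  have hnum : Tendsto (fun m : ℕ =>
      ((2 * m + 1 : ℝ) + ∑ i ∈ Finset.range m, (6 + 4 * (i : ℝ)) * (T (m - i)) ^ 2) * q ^ m)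
      atTop (nhds (L / 12)) := by
    have hcomb := ((hA.add (hB.div_const 12)).add (hC.div_const 12)).sub (hD.div_const 6)
    have h : (0:ℝ) + L / 12 + 0 / 12 - 0 / 6 = L / 12 := by ring
    rw [h] at hcomb
    exact hcomb.congr (fun m => (hnum_eq m).symm)
  have hden : Tendsto (fun m : ℕ => T (2 * m + 1) * q ^ m) atTop (nhds (a / (2 * s))) := by
    have hq2 : Tendsto (fun m : ℕ => q ^ (2 * m)) atTop (nhds 0) := by
      have h : (fun m : ℕ => q ^ (2 * m)) = fun m : ℕ => (q ^ 2) ^ m := by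
        funext m; rw [pow_mul]
      rw [h]
      exact tendsto_pow_atTop_nhds_zero_of_lt_one (by positivity) (by nlinarith)
    have h1' : Tendsto (fun m : ℕ => (a - b * q ^ (2 * m)) / (2 * s)) atTop
        (nhds ((a - b * 0) / (2 * s))) :=
      ((tendsto_const_nhds.sub (hq2.const_mul b)).div_const (2 * s))
    rw [mul_zero, sub_zero] at h1'
    exact h1'.congr (fun m => (hden_eq m).symm)
  have ha_pos : 0 < a := by rw [ha_def]; linarith
  have hden_ne : a / (2 * s) ≠ 0 := by positivity
  have hmain := hnum.div hden hden_ne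
  have hfinal : (L / 12) / (a / (2 * s)) = (3 + s) / 9 := by
    have hq_val : q = 7 - 4 * s := by
      rw [hq_def, hb_def]; linear_combination hs2
    have h1q : 1 - q = 4 * s - 6 := by rw [hq_val]; ring
    have h1q_ne : (4 * s - 6 : ℝ) ≠ 0 := by nlinarith
    rw [hL_def, h1q, hq_val, ha_def]
    have h2s_ne' : (2 + s : ℝ) ≠ 0 := by positivity
    field_simp
    ring_nf
    linear_combination (-192 * s ^ 2 - 384 * s + 864) * hs2
  rw [hfinal] at hmain
  refine hmain.congr (fun m => ?_)
  exact mul_div_mul_right _ _ (pow_ne_zero m (ne_of_gt hq0))
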